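/- For λ ~ Beta(α, α) with α > 0 and any integer n ≥ 1, the central moment satisfies E[(λ − 1/2)^{2n}] ≤ (1/4)ⁿ · 1/(2α+1)ⁿ · (2n)!/(2ⁿ n!) · ∏_{k=1}^{n-1} (2α + 2k)/(2α + 2k + 1) ≤ (2n−1)!! / (4(2α+1))ⁿ; in particular E[(λ − 1/2)²] = 1/(4(2α+1)), which tends to 0 as α → ∞. -/

import Mathlib

open MeasureTheory Set Filter Finset

open intervalIntegral

lemma w_intervalIntegrable {α : ℝ} (hα : 0 < α) :
    IntervalIntegrable (fun t : ℝ => t ^ (α - 1) * (1 - t) ^ (α - 1)) volume 0 1 := by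
  have hL : IntervalIntegrable (fun t : ℝ => t ^ (α - 1) * (1 - t) ^ (α - 1)) volume 0 (1/2) := by
    apply IntervalIntegrable.mul_continuousOn
    · exact intervalIntegrable_rpow' (by linarith)
    · apply ContinuousOn.rpow_const
      · exact (continuous_const.sub continuous_id).continuousOn
      · intro x hx
        rw [uIcc_of_le (by norm_num : (0:ℝ) ≤ 1/2)] at hx
        left
        have := hx.2
        intro h; linarith [h]
  have hR : IntervalIntegrable (fun t : ℝ => t ^ (α - 1) * (1 - t) ^ (α - 1)) volume (1/2) 1 := by
    have := (hL.comp_sub_left 1)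
    simp only [sub_sub_cancel] at this
    have h2 : (fun x : ℝ => (1 - x) ^ (α - 1) * x ^ (α - 1))
        = fun t : ℝ => t ^ (α - 1) * (1 - t) ^ (α - 1) := by
      funext t; rw [mul_comm]
    rw [h2] at this
    norm_num at this
    exact this.symm
  exact hL.trans hR

lemma w_integrableOn {α : ℝ} (hα : 0 < α) :
    IntegrableOn (fun t : ℝ => t ^ (α - 1) * (1 - t) ^ (α - 1)) (Ioo 0 1) volume := by
  have := (intervalIntegrable_iff_integrableOn_Ioo_of_le (by norm_num : (0:ℝ) ≤ 1)).mp
    (w_intervalIntegrable hα)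
  exact this

lemma mom_aesm {α : ℝ} (m : ℕ) :
    AEStronglyMeasurable (fun t : ℝ => (t - 1/2) ^ m * (t ^ (α - 1) * (1 - t) ^ (α - 1)))
      (volume.restrict (Ioo 0 1)) := by
  apply ContinuousOn.aestronglyMeasurable _ measurableSet_Ioo
  apply ContinuousOn.mul
  · exact ((continuous_id.sub continuous_const).pow m).continuousOn
  · apply ContinuousOn.mul
    · exact ContinuousOn.rpow_const continuousOn_id (fun x hx => Or.inl (ne_of_gt hx.1))
    · exact ContinuousOn.rpow_const (continuous_const.sub continuous_id).continuousOn
        (fun x hx => Or.inl (by simp; linarith [hx.2]))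

lemma mom_integrableOn {α : ℝ} (hα : 0 < α) (m : ℕ) :
    IntegrableOn (fun t : ℝ => (t - 1/2) ^ m * (t ^ (α - 1) * (1 - t) ^ (α - 1)))
      (Ioo 0 1) volume := by
  apply Integrable.mono' (w_integrableOn hα) (mom_aesm m)
  filter_upwards [ae_restrict_mem measurableSet_Ioo] with t ht
  have h1 : (0:ℝ) ≤ t ^ (α - 1) * (1 - t) ^ (α - 1) :=
    mul_nonneg (Real.rpow_nonneg ht.1.le _) (Real.rpow_nonneg (by linarith [ht.2]) _)
  rw [norm_mul, Real.norm_eq_abs, Real.norm_eq_abs, abs_of_nonneg h1, abs_pow]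
  have h2 : |t - 1/2| ≤ 1 := by
    rw [abs_le]; constructor <;> [linarith [ht.1]; linarith [ht.2]]
  calc |t - 1/2| ^ m * (t ^ (α - 1) * (1 - t) ^ (α - 1))
      ≤ 1 ^ m * (t ^ (α - 1) * (1 - t) ^ (α - 1)) := by
        apply mul_le_mul_of_nonneg_right _ h1
        exact pow_le_pow_left₀ (abs_nonneg _) h2 m
    _ = _ := by rw [one_pow, one_mul]

lemma w_pos {α : ℝ} (hα : 0 < α) :
    0 < ∫ t in Ioo (0:ℝ) 1, t ^ (α - 1) * (1 - t) ^ (α - 1) := by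
  have h := intervalIntegral.intervalIntegral_pos_of_pos_on (w_intervalIntegrable hα)
    (fun x hx => mul_pos (Real.rpow_pos_of_pos hx.1 _)
      (Real.rpow_pos_of_pos (by linarith [hx.2]) _)) (by norm_num)
  rwa [intervalIntegral.integral_of_le (by norm_num : (0:ℝ) ≤ 1),
    MeasureTheory.integral_Ioc_eq_integral_Ioo] at h

lemma beta_recurrence {α : ℝ} (hα : 0 < α) (k : ℕ) :
    (2*α + 2*k + 1) * ∫ t in Ioo (0:ℝ) 1, (t - 1/2) ^ (2*k+2) * (t ^ (α - 1) * (1 - t) ^ (α - 1))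
    = ((2*k+1)/4) * ∫ t in Ioo (0:ℝ) 1, (t - 1/2) ^ (2*k) * (t ^ (α - 1) * (1 - t) ^ (α - 1)) := by
  set F : ℝ → ℝ := fun t => (t - 1/2) ^ (2*k+1) * (t ^ α * (1 - t) ^ α) with hF
  set f' : ℝ → ℝ := fun t =>
      ((2*(k:ℝ)+1)/4) * ((t - 1/2) ^ (2*k) * (t ^ (α - 1) * (1 - t) ^ (α - 1)))
      - (2*α + 2*(k:ℝ) + 1) * ((t - 1/2) ^ (2*k+2) * (t ^ (α - 1) * (1 - t) ^ (α - 1))) with hf'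
  have hcont : ContinuousOn F (Icc (0:ℝ) 1) := by
    apply ContinuousOn.mul
    · exact ((continuous_id.sub continuous_const).pow _).continuousOn
    · apply ContinuousOn.mul
      · exact ContinuousOn.rpow_const continuousOn_id (fun x _ => Or.inr hα.le)
      · exact ContinuousOn.rpow_const (continuous_const.sub continuous_id).continuousOn
          (fun x _ => Or.inr hα.le)
  have hderiv : ∀ x ∈ Ioo (0:ℝ) 1, HasDerivAt F (f' x) x := by
    intro x hx
    obtain ⟨hx0, hx1⟩ := hx
    have h1 : HasDerivAt (fun t : ℝ => t ^ α) (α * x ^ (α - 1)) x :=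
      Real.hasDerivAt_rpow_const (Or.inl hx0.ne')
    have h2 : HasDerivAt (fun t : ℝ => (1 - t) ^ α) (α * (1-x) ^ (α - 1) * (-1)) x := by
      have hbase : HasDerivAt (fun t : ℝ => 1 - t) (-1) x := by
        exact (hasDerivAt_id' x).const_sub 1
      exact (Real.hasDerivAt_rpow_const (p := α) (x := 1 - x)
        (Or.inl (by intro h; linarith [h]))).comp x hbase
    have h3 : HasDerivAt (fun t : ℝ => (t - 1/2) ^ (2*k+1))
        (((2*k+1 : ℕ) : ℝ) * (x - 1/2) ^ (2*k) * 1) x := by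
      have := ((hasDerivAt_id' x).sub_const (1/2 : ℝ)).pow (2*k+1)
      rw [Nat.add_sub_cancel] at this
      exact this
    have h := h3.mul (h1.mul h2)
    have ex : x ^ α = x ^ (α - 1) * x := by
      rw [← Real.rpow_add_one hx0.ne' (α - 1), sub_add_cancel]
    have ey : (1 - x) ^ α = (1 - x) ^ (α - 1) * (1 - x) := by
      rw [← Real.rpow_add_one (by intro h; linarith [h] : (1:ℝ) - x ≠ 0) (α - 1), sub_add_cancel]
    refine h.congr_deriv ?_
    rw [hf']
    simp only [Pi.mul_apply, ex, ey]
    push_cast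
    ring
  have hint' : IntegrableOn f' (Ioo (0:ℝ) 1) volume :=
    (((mom_integrableOn hα (2*k)).const_mul _).sub ((mom_integrableOn hα (2*k+2)).const_mul _))
  have hint : IntervalIntegrable f' volume 0 1 :=
    (intervalIntegrable_iff_integrableOn_Ioo_of_le (by norm_num)).mpr hint'
  have hFTC := intervalIntegral.integral_eq_sub_of_hasDerivAt_of_le (by norm_num : (0:ℝ) ≤ 1)
    hcont hderiv hint
  have hF0 : F 0 = 0 := by
    simp [hF, Real.zero_rpow hα.ne']
  have hF1 : F 1 = 0 := by
    simp [hF, Real.zero_rpow hα.ne']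
  rw [hF0, hF1, sub_zero, intervalIntegral.integral_of_le (by norm_num : (0:ℝ) ≤ 1),
    MeasureTheory.integral_Ioc_eq_integral_Ioo] at hFTC
  have hsplit : ∫ t in Ioo (0:ℝ) 1, f' t
      = ((2*(k:ℝ)+1)/4) * (∫ t in Ioo (0:ℝ) 1, (t - 1/2) ^ (2*k) * (t ^ (α - 1) * (1 - t) ^ (α - 1)))
      - (2*α + 2*(k:ℝ) + 1) * (∫ t in Ioo (0:ℝ) 1, (t - 1/2) ^ (2*k+2) * (t ^ (α - 1) * (1 - t) ^ (α - 1))) := by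
    rw [hf']
    rw [MeasureTheory.integral_sub ((mom_integrableOn hα (2*k)).const_mul _)
      ((mom_integrableOn hα (2*k+2)).const_mul _),
      MeasureTheory.integral_const_mul, MeasureTheory.integral_const_mul]
  rw [hsplit] at hFTC
  linarith [hFTC]

lemma moment_formula {α : ℝ} (hα : 0 < α) (n : ℕ) :
    ∫ t in Ioo (0:ℝ) 1, (t - 1/2) ^ (2*n) * (t ^ (α - 1) * (1 - t) ^ (α - 1))
    = (∏ k ∈ Finset.range n, (2*(k:ℝ)+1)/(4*(2*α+2*k+1)))
      * ∫ t in Ioo (0:ℝ) 1, t ^ (α - 1) * (1 - t) ^ (α - 1) := by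
  induction n with
  | zero => simp
  | succ n ih =>
    have hrec := beta_recurrence hα n
    have hpos : (0:ℝ) < 2*α + 2*n + 1 := by positivity
    have h2 : 2*(n+1) = 2*n+2 := by ring
    rw [h2]
    have : ∫ t in Ioo (0:ℝ) 1, (t - 1/2) ^ (2*n+2) * (t ^ (α - 1) * (1 - t) ^ (α - 1))
        = ((2*(n:ℝ)+1)/(4*(2*α+2*n+1)))
          * ∫ t in Ioo (0:ℝ) 1, (t - 1/2) ^ (2*n) * (t ^ (α - 1) * (1 - t) ^ (α - 1)) := by
      field_simp at hrec ⊢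
      linarith [hrec]
    rw [this, ih, Finset.prod_range_succ]
    push_cast
    ring

lemma fact_df {n : ℕ} (hn : 1 ≤ n) :
    (Nat.factorial (2*n) : ℝ) / (2 ^ n * (Nat.factorial n : ℝ))
      = (Nat.doubleFactorial (2*n - 1) : ℝ) := by
  have h1 : (2*n - 1) + 1 = 2*n := by omega
  have h2 : Nat.factorial (2*n) = Nat.doubleFactorial (2*n) * Nat.doubleFactorial (2*n - 1) := by
    conv_lhs => rw [← h1]
    rw [Nat.factorial_eq_mul_doubleFactorial, h1]
  have h3 : Nat.doubleFactorial (2*n) = 2 ^ n * Nat.factorial n := Nat.doubleFactorial_two_mul n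
  rw [h2, h3]
  push_cast
  field_simp

lemma df_prod {n : ℕ} (hn : 1 ≤ n) :
    (Nat.doubleFactorial (2*n - 1) : ℝ) = ∏ k ∈ Finset.range n, (2*(k:ℝ)+1) := by
  obtain ⟨m, rfl⟩ := Nat.exists_eq_add_of_le hn
  have h1 : 2*(1+m) - 1 = 2*m + 1 := by omega
  rw [h1, Nat.doubleFactorial_eq_prod_odd]
  rw [show 1 + m = m + 1 by omega, Finset.prod_range_succ']
  push_cast
  norm_num

/-- For λ ~ Beta(α, α) with α > 0 and n ≥ 1, the central moment E[(λ-1/2)^{2n}] is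
bounded by (1/4)ⁿ (1/(2α+1))ⁿ (2n)!/(2ⁿ n!) ∏_{k=1}^{n-1} (2α+2k)/(2α+2k+1), which is
itself at most (2n-1)!!/(4(2α+1))ⁿ; in particular E[(λ-1/2)²] = 1/(4(2α+1)), which
tends to 0 as α → ∞. -/
theorem beta_central_moment_bound (n : ℕ) (hn : 1 ≤ n) :
    (∀ α : ℝ, 0 < α →
      (∫ t in Ioo (0:ℝ) 1, (t - 1/2) ^ (2 * n) * (t ^ (α - 1) * (1 - t) ^ (α - 1))) /
        (∫ t in Ioo (0:ℝ) 1, t ^ (α - 1) * (1 - t) ^ (α - 1)) ≤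
        (1/4 : ℝ) ^ n * (1 / (2 * α + 1)) ^ n * ((Nat.factorial (2 * n) : ℝ) / (2 ^ n * (Nat.factorial n : ℝ))) *
          ∏ k ∈ Finset.Ico 1 n, (2 * α + 2 * k) / (2 * α + 2 * k + 1)) ∧
    (∀ α : ℝ, 0 < α →
      (1/4 : ℝ) ^ n * (1 / (2 * α + 1)) ^ n * ((Nat.factorial (2 * n) : ℝ) / (2 ^ n * (Nat.factorial n : ℝ))) *
          ∏ k ∈ Finset.Ico 1 n, (2 * α + 2 * k) / (2 * α + 2 * k + 1) ≤
        (Nat.doubleFactorial (2 * n - 1) : ℝ) / (4 * (2 * α + 1)) ^ n) ∧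
    (∀ α : ℝ, 0 < α →
      (∫ t in Ioo (0:ℝ) 1, (t - 1/2) ^ 2 * (t ^ (α - 1) * (1 - t) ^ (α - 1))) /
        (∫ t in Ioo (0:ℝ) 1, t ^ (α - 1) * (1 - t) ^ (α - 1)) = 1 / (4 * (2 * α + 1))) ∧
    Tendsto (fun α : ℝ => 1 / (4 * (2 * α + 1))) atTop (nhds 0) := by
  refine ⟨?_, ?_, ?_, ?_⟩
  · -- Part 1
    intro α hα
    have hw := w_pos hα
    rw [moment_formula hα n, mul_div_assoc, div_self hw.ne', mul_one, fact_df hn, df_prod hn]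
    have h2a : (0:ℝ) < 2*α+1 := by linarith
    calc ∏ k ∈ Finset.range n, (2*(k:ℝ)+1)/(4*(2*α+2*k+1))
        ≤ ∏ k ∈ Finset.range n,
            ((2*(k:ℝ)+1) * (1/(4*(2*α+1))) * (if k = 0 then 1 else (2*α+2*k)/(2*α+2*k+1))) := by
          apply Finset.prod_le_prod
          · intro k _; positivity
          · intro k _
            rcases Nat.eq_zero_or_pos k with hk | hk
            · subst hk; norm_num
            · have hk1 : (1:ℝ) ≤ k := by exact_mod_cast hk
              rw [if_neg (by omega)]
              rw [mul_one_div, div_mul_div_comm,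
                div_le_div_iff₀ (by positivity) (by positivity)]
              have hA : (0:ℝ) < (2*(k:ℝ)+1) * (4*(2*α+2*(k:ℝ)+1)) := by positivity
              have hle : (2*α+1 : ℝ) ≤ 2*α+2*(k:ℝ) := by linarith
              nlinarith [mul_le_mul_of_nonneg_left hle hA.le]
      _ = (1/4 : ℝ) ^ n * (1 / (2 * α + 1)) ^ n * (∏ k ∈ Finset.range n, (2*(k:ℝ)+1)) *
            ∏ k ∈ Finset.Ico 1 n, (2 * α + 2 * k) / (2 * α + 2 * k + 1) := by
          rw [Finset.prod_mul_distrib, Finset.prod_mul_distrib, Finset.prod_const,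
            Finset.card_range]
          have e1 : (1/(4*(2*α+1)))^n = (1/4 : ℝ)^n * (1/(2*α+1))^n := by
            rw [← mul_pow]; congr 1; rw [div_mul_div_comm, one_mul]
          have e2 : (∏ k ∈ Finset.range n, (if k = 0 then (1:ℝ) else (2*α+2*k)/(2*α+2*k+1)))
              = ∏ k ∈ Finset.Ico 1 n, (2 * α + 2 * k) / (2 * α + 2 * k + 1) := by
            rw [Finset.range_eq_Ico, Finset.prod_eq_prod_Ico_succ_bot (by omega : 0 < n), if_pos rfl,
              one_mul]
            exact Finset.prod_congr rfl (fun k hk => by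
              rw [if_neg (Nat.one_le_iff_ne_zero.mp (Finset.mem_Ico.mp hk).1)])
          rw [e1, e2]; ring
  · -- Part 2
    intro α hα
    rw [fact_df hn]
    have h2a : (0:ℝ) < 2*α+1 := by linarith
    have hD : (0:ℝ) ≤ (Nat.doubleFactorial (2*n - 1) : ℝ) := by positivity
    have hc : ∏ k ∈ Finset.Ico 1 n, (2 * α + 2 * (k:ℝ)) / (2 * α + 2 * k + 1) ≤ 1 := by
      apply Finset.prod_le_one
      · intro k hk; positivity
      · intro k hk
        rw [div_le_one (by positivity)]; linarith
    have e1 : (1/4 : ℝ) ^ n * (1 / (2 * α + 1)) ^ n * (Nat.doubleFactorial (2*n - 1) : ℝ)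
        = (Nat.doubleFactorial (2*n - 1) : ℝ) / (4 * (2 * α + 1)) ^ n := by
      rw [← mul_pow, div_mul_div_comm, one_mul, div_pow, one_pow]
      ring
    rw [e1]
    calc (Nat.doubleFactorial (2*n - 1) : ℝ) / (4 * (2 * α + 1)) ^ n *
          ∏ k ∈ Finset.Ico 1 n, (2 * α + 2 * (k:ℝ)) / (2 * α + 2 * k + 1)
        ≤ (Nat.doubleFactorial (2*n - 1) : ℝ) / (4 * (2 * α + 1)) ^ n * 1 :=
          mul_le_mul_of_nonneg_left hc (by positivity)
      _ = _ := mul_one _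
  · -- Part 3
    intro α hα
    have hm := moment_formula hα 1
    simp only [show 2*1 = 2 from rfl] at hm
    rw [hm, mul_div_assoc, div_self (w_pos hα).ne', mul_one, Finset.prod_range_one]
    norm_num
  · -- Part 4
    have h : Tendsto (fun α : ℝ => 4*(2*α+1)) atTop atTop := by
      apply Filter.Tendsto.const_mul_atTop (by norm_num : (0:ℝ) < 4)
      apply Filter.tendsto_atTop_add_const_right
      exact Filter.Tendsto.const_mul_atTop two_pos tendsto_id
    have h2 := h.inv_tendsto_atTop
    rw [show (fun α : ℝ => 1/(4*(2*α+1))) = (fun α : ℝ => 4*(2*α+1))⁻¹ by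
      funext x; simp [one_div]]
    exact h2
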